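/- Let A : Matrix (Fin 3) (Fin 3) ℕ have rows (1,1,1), (1,0,1), (1,0,0) and B : Matrix (Fin 3) (Fin 3) ℕ have rows (0,1,1), (1,1,1), (0,1,0). Then (a) A and B are permutations of each other: there is a permutation σ of Fin 3 with B i j = A (σ i) (σ j) for all i, j; but (b) A and B are not related by the equivalence relation generated by primitive transfer alone: letting PT be the binary relation on 0-1 matrices over Fin 3 with PT X Y iff Y is a primitive transfer of X at some p with some data (K, M), the equivalence relation generated by PT does not relate A and B. -/

import Mathlib

/-- A 0-1 matrix. -/
def IsZeroOne {V : Type*} (B : Matrix V V ℕ) : Prop := ∀ i j, B i j = 0 ∨ B i j = 1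

/-- `C` is the primitive transfer of `B` at `p` with data `(K, M)`. -/
structure IsPrimitiveTransfer {V : Type*} [DecidableEq V] (B C : Matrix V V ℕ)
    (p : V) (K M : Finset V) : Prop where
  zeroOne : IsZeroOne B
  disjKM : Disjoint K M
  p_not_mem_M : p ∉ M
  row_p_nonzero : ∃ j, B p j ≠ 0
  row_m_nonzero : ∀ m ∈ M, ∃ j, B m j ≠ 0
  row_eq : ∀ j, B p j = (if j ∈ K then 1 else 0) + ∑ m ∈ M, B m j
  transfer : ∀ i j, C i j = if i = p then (if j ∈ K ∪ M then 1 else 0) else B i j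

/-- The primitive transfer relation on 0-1 matrices over `Fin 3`. -/
def PT (X Y : Matrix (Fin 3) (Fin 3) ℕ) : Prop :=
  ∃ (p : Fin 3) (K M : Finset (Fin 3)), IsPrimitiveTransfer X Y p K M

/-- The matrix `A` with rows `(1,1,1), (1,0,1), (1,0,0)`. -/
def A : Matrix (Fin 3) (Fin 3) ℕ := !![1,1,1; 1,0,1; 1,0,0]

/-- The matrix `B` with rows `(0,1,1), (1,1,1), (0,1,0)`. -/
def B : Matrix (Fin 3) (Fin 3) ℕ := !![0,1,1; 1,1,1; 0,1,0]

/-- The PT-equivalence class of `A`. -/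
def S : List (Matrix (Fin 3) (Fin 3) ℕ) :=
  [A, !![0,0,1; 1,0,1; 1,1,1], !![1,1,1; 1,0,1; 1,1,1]]

def InS (X : Matrix (Fin 3) (Fin 3) ℕ) : Prop := X ∈ S

instance : DecidablePred InS := fun X => inferInstanceAs (Decidable (X ∈ S))

lemma L1 : ∀ X ∈ S, ∀ (p : Fin 3) (K M : Finset (Fin 3)),
    Disjoint K M → p ∉ M →
    (∀ j, X p j = (if j ∈ K then 1 else 0) + ∑ m ∈ M, X m j) →
    (Matrix.of fun i j => if i = p then (if j ∈ K ∪ M then 1 else 0) else X i j) ∈ S := by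
  decide

instance (X : Matrix (Fin 3) (Fin 3) ℕ) : Decidable (IsZeroOne X) :=
  @Fintype.decidableForallFintype _ _ (fun _ => @Fintype.decidableForallFintype _ _ (fun _ => instDecidableOr) _) _

lemma L2 : ∀ Y ∈ S, ∀ (p : Fin 3) (K M : Finset (Fin 3)),
    Disjoint K M → p ∉ M →
    (∀ j, Y p j = if j ∈ K ∪ M then 1 else 0) →
    IsZeroOne (Matrix.of fun i j =>
      if i = p then (if j ∈ K then 1 else 0) + ∑ m ∈ M, Y m j else Y i j) →
    (Matrix.of fun i j =>
      if i = p then (if j ∈ K then 1 else 0) + ∑ m ∈ M, Y m j else Y i j) ∈ S := by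
  decide

lemma pt_inv {X Y : Matrix (Fin 3) (Fin 3) ℕ} (h : PT X Y) : InS X ↔ InS Y := by
  obtain ⟨p, K, M, h⟩ := h
  have hY : Y = Matrix.of fun i j =>
      if i = p then (if j ∈ K ∪ M then 1 else 0) else X i j := by
    ext i j; rw [h.transfer]; rfl
  have hX : X = Matrix.of fun i j =>
      if i = p then (if j ∈ K then 1 else 0) + ∑ m ∈ M, Y m j else Y i j := by
    ext i j
    show X i j = if i = p then (if j ∈ K then 1 else 0) + ∑ m ∈ M, Y m j else Y i j
    by_cases hi : i = p
    · rw [if_pos hi, hi, h.row_eq]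
      congr 1
      refine Finset.sum_congr rfl fun m hm => ?_
      rw [h.transfer]
      have : m ≠ p := fun hmp => h.p_not_mem_M (hmp ▸ hm)
      rw [if_neg this]
    · rw [if_neg hi, h.transfer, if_neg hi]
  constructor
  · intro hx
    have := L1 X hx p K M h.disjKM h.p_not_mem_M h.row_eq
    rwa [← hY] at this
  · intro hy
    have hz : IsZeroOne (Matrix.of fun i j =>
        if i = p then (if j ∈ K then 1 else 0) + ∑ m ∈ M, Y m j else Y i j) := by
      rw [← hX]; exact h.zeroOne
    have hYp : ∀ j, Y p j = if j ∈ K ∪ M then 1 else 0 := fun j => by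
      rw [h.transfer, if_pos rfl]
    have := L2 Y hy p K M h.disjKM h.p_not_mem_M hYp hz
    rwa [← hX] at this

theorem stmt_8 :
    (∃ σ : Equiv.Perm (Fin 3), ∀ i j, B i j = A (σ i) (σ j)) ∧
    ¬ Relation.EqvGen PT A B := by
  constructor
  · exact ⟨Equiv.swap 0 1, fun i j => by fin_cases i <;> fin_cases j <;> rfl⟩
  · intro h
    have key : ∀ X Y, Relation.EqvGen PT X Y → (InS X ↔ InS Y) := by
      intro X Y h
      induction h with
      | rel _ _ hxy => exact pt_inv hxy
      | refl _ => rfl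
      | symm _ _ _ ih => exact ih.symm
      | trans _ _ _ _ _ ih1 ih2 => exact ih1.trans ih2
    have hA : InS A := by decide
    have hB : ¬ InS B := by decide
    exact hB ((key A B h).mp hA)
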